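/- For every integer n ≥ 0 the following identity holds: (n+1)/(q;q)_{n+1} = −∑_{k=0}^{n} 1/((q^{k+1} − 1)(q;q)_{n−k}). -/

import Mathlib

/-- The `q`-Pochhammer symbol `(q;q)_n = ∏_{k=1}^n (1 − qᵏ)`. -/
noncomputable def qPoch (q : ℂ) (n : ℕ) : ℂ :=
  ∏ k ∈ Finset.range n, (1 - q ^ (k + 1))

/-- `A q n = 1/(q;q)_n`. -/
noncomputable def qA (q : ℂ) (n : ℕ) : ℂ := (qPoch q n)⁻¹

/-- `B q k = 1/(1 - q^(k+1))`. -/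
noncomputable def qB (q : ℂ) (k : ℕ) : ℂ := (1 - q ^ (k + 1))⁻¹

/-- The sum `S n = ∑_{k=0}^n b_k a_{n-k}`. -/
noncomputable def qS (q : ℂ) (n : ℕ) : ℂ :=
  ∑ k ∈ Finset.range (n + 1), qB q k * qA q (n - k)

lemma one_sub_ne (q : ℂ) (hq : 1 < ‖q‖) (k : ℕ) : 1 - q ^ (k + 1) ≠ 0 := by
  intro h
  have h1 : q ^ (k + 1) = 1 := by linear_combination -h
  have h2 : ‖q‖ ^ (k + 1) = 1 := by
    rw [← norm_pow, h1, norm_one]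
  have h3 : 1 < ‖q‖ ^ (k + 1) := one_lt_pow₀ hq (Nat.succ_ne_zero k)
  linarith

lemma qPoch_ne (q : ℂ) (hq : 1 < ‖q‖) (n : ℕ) : qPoch q n ≠ 0 :=
  Finset.prod_ne_zero_iff.2 fun k _ => one_sub_ne q hq k

lemma qPoch_succ (q : ℂ) (n : ℕ) : qPoch q (n + 1) = qPoch q n * (1 - q ^ (n + 1)) :=
  Finset.prod_range_succ _ _

lemma qA_succ (q : ℂ) (hq : 1 < ‖q‖) (n : ℕ) :
    qA q (n + 1) * (1 - q ^ (n + 1)) = qA q n := by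
  unfold qA
  rw [qPoch_succ]
  field_simp [qPoch_ne q hq, one_sub_ne q hq]

lemma qB_mul (q : ℂ) (hq : 1 < ‖q‖) (k : ℕ) :
    (1 - q ^ (k + 1)) * qB q k = 1 := by
  unfold qB
  field_simp [one_sub_ne q hq k]

lemma tele (q : ℂ) (hq : 1 < ‖q‖) (n : ℕ) :
    ∑ m ∈ Finset.range (n + 1), q ^ m * qA q m = qA q n := by
  induction n with
  | zero => simp [qA, qPoch]
  | succ n ih =>
    rw [Finset.sum_range_succ, ih]
    linear_combination -qA_succ q hq n

lemma keyrec (q : ℂ) (hq : 1 < ‖q‖) (n : ℕ) :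
    qS q (n + 1) * (1 - q ^ (n + 2)) = qS q n + qA q (n + 1) := by
  have step : ∀ k ∈ Finset.range (n + 2), qB q k * qA q (n + 1 - k) =
      qB q k * (qA q (n + 1 - k) * (1 - q ^ (n + 1 - k)))
        + q ^ (n + 1 - k) * qA q (n + 1 - k)
        + q ^ (n + 2) * (qB q k * qA q (n + 1 - k)) := by
    intro k hk
    have hk' : k ≤ n + 1 := by simpa [Nat.lt_succ_iff] using hk
    have hpow : q ^ (n + 1 - k) * q ^ (k + 1) = q ^ (n + 2) := by
      rw [← pow_add]
      congr 1
      omega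
    have hb := qB_mul q hq k
    linear_combination (qA q (n + 1 - k) * q ^ (n + 1 - k)) * hb
      + (qA q (n + 1 - k) * qB q k) * hpow
  have hsplit : qS q (n + 1) = qS q n + qA q (n + 1) + q ^ (n + 2) * qS q (n + 1) := by
    have h1 : ∑ k ∈ Finset.range (n + 2),
        qB q k * (qA q (n + 1 - k) * (1 - q ^ (n + 1 - k))) = qS q n := by
      rw [Finset.sum_range_succ]
      have hz : qB q (n + 1) * (qA q (n + 1 - (n + 1)) * (1 - q ^ (n + 1 - (n + 1)))) = 0 := by
        simp
      rw [hz, add_zero]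
      unfold qS
      refine Finset.sum_congr rfl fun k hk => ?_
      have hk' : k ≤ n := by simpa [Nat.lt_succ_iff] using hk
      have he : n + 1 - k = (n - k) + 1 := by omega
      rw [he, qA_succ q hq]
    have h2 : ∑ k ∈ Finset.range (n + 2), q ^ (n + 1 - k) * qA q (n + 1 - k)
        = qA q (n + 1) := by
      have hr := Finset.sum_range_reflect (fun m => q ^ m * qA q m) (n + 2)
      calc ∑ k ∈ Finset.range (n + 2), q ^ (n + 1 - k) * qA q (n + 1 - k)
          = ∑ k ∈ Finset.range (n + 2), q ^ (n + 2 - 1 - k) * qA q (n + 2 - 1 - k) := by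
            refine Finset.sum_congr rfl fun k hk => ?_
            have : n + 2 - 1 - k = n + 1 - k := by omega
            rw [this]
        _ = ∑ m ∈ Finset.range (n + 2), q ^ m * qA q m :=
            Finset.sum_range_reflect (fun m => q ^ m * qA q m) (n + 2)
        _ = qA q (n + 1) := tele q hq (n + 1)
    have h3 : ∑ k ∈ Finset.range (n + 2), q ^ (n + 2) * (qB q k * qA q (n + 1 - k))
        = q ^ (n + 2) * qS q (n + 1) := by
      rw [← Finset.mul_sum]
      rfl
    calc qS q (n + 1)
        = ∑ k ∈ Finset.range (n + 2),
            (qB q k * (qA q (n + 1 - k) * (1 - q ^ (n + 1 - k)))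
              + q ^ (n + 1 - k) * qA q (n + 1 - k)
              + q ^ (n + 2) * (qB q k * qA q (n + 1 - k))) :=
          Finset.sum_congr rfl step
      _ = (∑ k ∈ Finset.range (n + 2),
              qB q k * (qA q (n + 1 - k) * (1 - q ^ (n + 1 - k))))
            + (∑ k ∈ Finset.range (n + 2), q ^ (n + 1 - k) * qA q (n + 1 - k))
            + (∑ k ∈ Finset.range (n + 2), q ^ (n + 2) * (qB q k * qA q (n + 1 - k))) := by
          rw [Finset.sum_add_distrib, Finset.sum_add_distrib]
      _ = qS q n + qA q (n + 1) + q ^ (n + 2) * qS q (n + 1) := by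
          rw [h1, h2, h3]
  linear_combination hsplit

lemma mainS (q : ℂ) (hq : 1 < ‖q‖) (n : ℕ) :
    qS q n = ((n : ℂ) + 1) * qA q (n + 1) := by
  induction n with
  | zero => simp [qS, qA, qB, qPoch]
  | succ n ih =>
    have h := keyrec q hq n
    rw [ih] at h
    have hne : (1 - q ^ (n + 2)) ≠ 0 := one_sub_ne q hq (n + 1)
    have h2 : qA q (n + 2) * (1 - q ^ (n + 2)) = qA q (n + 1) := qA_succ q hq (n + 1)
    have goal' : qS q (n + 1) * (1 - q ^ (n + 2))
        = (((n : ℂ) + 1) + 1) * qA q (n + 2) * (1 - q ^ (n + 2)) := by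
      linear_combination h - ((n : ℂ) + 2) * h2
    have := mul_right_cancel₀ hne goal'
    rw [this]
    push_cast
    ring

/-- For every `n ≥ 0`,
`(n+1)/(q;q)_{n+1} = −∑_{k=0}^n 1/((q^{k+1} − 1)(q;q)_{n−k})`. -/
theorem qPoch_identity (q : ℂ) (hq : 1 < ‖q‖) (n : ℕ) :
    ((n : ℂ) + 1) / qPoch q (n + 1)
      = -∑ k ∈ Finset.range (n + 1), 1 / ((q ^ (k + 1) - 1) * qPoch q (n - k)) := by
  have hterm : ∀ k ∈ Finset.range (n + 1),
      1 / ((q ^ (k + 1) - 1) * qPoch q (n - k)) = -(qB q k * qA q (n - k)) := by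
    intro k _
    have h1 : q ^ (k + 1) - 1 ≠ 0 := by
      have := one_sub_ne q hq k
      intro h
      apply this
      linear_combination -h
    have h2 : qPoch q (n - k) ≠ 0 := qPoch_ne q hq (n - k)
    unfold qA qB
    rw [one_div, ← mul_inv,
      show (q ^ (k + 1) - 1) * qPoch q (n - k)
        = -((1 - q ^ (k + 1)) * qPoch q (n - k)) from by ring, inv_neg]
  rw [Finset.sum_congr rfl hterm, Finset.sum_neg_distrib, neg_neg]
  have hS : ∑ k ∈ Finset.range (n + 1), qB q k * qA q (n - k) = qS q n := rfl
  rw [hS, mainS q hq n, qA, div_eq_mul_inv]
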